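/- arXiv:2407.05896 — 2 statements merged into one kernel-verified Lean document; each statement's English description precedes it below -/
import Mathlib

section
/- In the MP_d(Λ,Ω) model, all pairwise covariances are nonnegative: for any indices 1 ≤ i < j ≤ d, E[X_i X_j] ≥ E[X_i]·E[X_j], where expectations are taken with respect to the product measure μ^d on (0,1)^d. That is, the model can only exhibit positive dependence. -/
set_option maxHeartbeats 1000000
open scoped ENNReal NNReal


open MeasureTheory

/-- The uniform probability measure on the open interval (0,1):
Lebesgue measure restricted to (0,1). -/
noncomputable def unif : Measure ℝ := volume.restrict (Set.Ioo (0 : ℝ) 1)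

/-- The quantile transform of a cdf `F` on ℕ: `q_F(u) = min {n : u ≤ F n}`. -/
noncomputable def qt (F : ℕ → ℝ) (u : ℝ) : ℕ := sInf {n : ℕ | u ≤ F n}

/-- The Poisson(λ) cumulative distribution function on ℕ. -/
noncomputable def poisCdf (l : ℝ) (n : ℕ) : ℝ :=
  ∑ k ∈ Finset.range (n + 1), Real.exp (-l) * l ^ k / (Nat.factorial k)

/-- The Poisson(λ) probability mass function on ℕ. -/
noncomputable def poisPmf (l : ℝ) (n : ℕ) : ℝ :=
  Real.exp (-l) * l ^ n / (Nat.factorial n)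

/-- `F(n-1)` with the convention `F(-1) = 0`. -/
noncomputable def cdfm1 (F : ℕ → ℝ) (n : ℕ) : ℝ := if n = 0 then 0 else F (n - 1)

/-- The product measure μ^d of the uniform measure on (0,1) over coordinates. -/
noncomputable def pmeas (d : ℕ) : Measure (Fin d → ℝ) := Measure.pi (fun _ => unif)

/-- Component `i` of the MP_d(Λ,Ω) vector: `X_i(u) = Σ_{j ≤ i} q_{ω_{ij} λ_i}(u_j)`. -/
noncomputable def mpX (d : ℕ) (lam : Fin d → ℝ) (om : Fin d → Fin d → ℝ)
    (i : Fin d) (u : Fin d → ℝ) : ℕ :=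
  ∑ j ∈ Finset.Iic i, qt (poisCdf (om i j * lam i)) (u j)

instance : IsProbabilityMeasure unif := by
  constructor
  rw [unif, Measure.restrict_apply_univ, Real.volume_Ioo]
  norm_num

lemma exp_hasSum (l : ℝ) : HasSum (fun k => Real.exp (-l) * l ^ k / (Nat.factorial k)) 1 := by
  have h1 : Real.exp l = ∑' n : ℕ, l ^ n / (Nat.factorial n) := by
    rw [Real.exp_eq_exp_ℝ, NormedSpace.exp_eq_tsum_div]
  have hs : Summable (fun n : ℕ => l ^ n / (Nat.factorial n)) := Real.summable_pow_div_factorial l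
  have := (hs.hasSum_iff.mpr h1.symm).mul_left (Real.exp (-l))
  simpa [mul_div_assoc, Real.exp_neg, inv_mul_cancel₀ (Real.exp_ne_zero l), ← Real.exp_add] using this

lemma poisCdf_mono (l : ℝ) (hl : 0 ≤ l) : Monotone (poisCdf l) := by
  intro a b hab
  apply Finset.sum_le_sum_of_subset_of_nonneg
  · exact Finset.range_subset_range.mpr (by omega)
  · intro k _ _
    positivity

lemma poisCdf_le_one (l : ℝ) (hl : 0 ≤ l) (n : ℕ) : poisCdf l n ≤ 1 := by
  have h := exp_hasSum l
  rw [poisCdf]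
  have := Summable.sum_le_tsum (Finset.range (n+1)) (fun k _ => by positivity) h.summable
  rwa [h.tsum_eq] at this

lemma poisCdf_nonneg (l : ℝ) (hl : 0 ≤ l) (n : ℕ) : 0 ≤ poisCdf l n := by
  apply Finset.sum_nonneg; intro k _; positivity

lemma qt_le_iff {F : ℕ → ℝ} (hF : Monotone F) {u : ℝ} (hne : {n | u ≤ F n}.Nonempty) (n : ℕ) :
    qt F u ≤ n ↔ u ≤ F n := by
  constructor
  · intro h
    exact le_trans (Nat.sInf_mem hne) (hF h)
  · intro h
    exact Nat.sInf_le h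

lemma qt_measurable {F : ℕ → ℝ} (hF : Monotone F) : Measurable (qt F) := by
  have key : ∀ n, {u : ℝ | qt F u ≤ n} = Set.Iic (F n) ∪ ⋂ m, Set.Ioi (F m) := by
    intro n
    ext u
    simp only [Set.mem_setOf_eq, Set.mem_union, Set.mem_Iic, Set.mem_iInter, Set.mem_Ioi]
    constructor
    · intro h
      rcases Set.eq_empty_or_nonempty {m : ℕ | u ≤ F m} with he | hne
      · right
        intro m
        by_contra hm
        exact Set.eq_empty_iff_forall_notMem.mp he m (not_lt.mp hm)
      · left
        exact le_trans (Nat.sInf_mem hne) (hF h)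
    · rintro (h | h)
      · exact Nat.sInf_le h
      · have : {m : ℕ | u ≤ F m} = ∅ := by
          ext m; simp only [Set.mem_setOf_eq, Set.mem_empty_iff_false, iff_false, not_le]
          exact h m
        simp [qt, this]
  have hle : ∀ n, MeasurableSet {u : ℝ | qt F u ≤ n} := by
    intro n
    rw [key]
    exact (measurableSet_Iic).union (MeasurableSet.iInter fun m => measurableSet_Ioi)
  apply measurable_to_countable'
  intro n
  cases n with
  | zero =>
    have : qt F ⁻¹' {0} = {u : ℝ | qt F u ≤ 0} := by ext u; simp [Nat.le_zero]
    rw [this]; exact hle 0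
  | succ m =>
    have : qt F ⁻¹' {m+1} = {u : ℝ | qt F u ≤ m+1} \ {u : ℝ | qt F u ≤ m} := by
      ext u; simp only [Set.mem_preimage, Set.mem_singleton_iff, Set.mem_diff, Set.mem_setOf_eq]
      omega
    rw [this]; exact (hle (m+1)).diff (hle m)

lemma qt_monoOn {F : ℕ → ℝ} (hF : Monotone F)
    (h : ∀ u ∈ Set.Ioo (0:ℝ) 1, {n : ℕ | u ≤ F n}.Nonempty) :
    MonotoneOn (fun u => (qt F u : ℝ)) (Set.Ioo 0 1) := by
  intro u hu v hv huv
  have hv' : v ≤ F (qt F v) := Nat.sInf_mem (h v hv)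
  have h2 : qt F u ≤ qt F v := Nat.sInf_le (le_trans huv hv')
  simp only []
  exact_mod_cast h2

lemma poisCdf_nonempty {l : ℝ} (hl : 0 ≤ l) {u : ℝ} (hu : u < 1) :
    {n : ℕ | u ≤ poisCdf l n}.Nonempty := by
  have h := (exp_hasSum l).tendsto_sum_nat.comp (Filter.tendsto_add_atTop_nat 1)
  have : ∀ᶠ n in Filter.atTop, u < poisCdf l n := by
    have := h.eventually (eventually_gt_nhds hu)
    simpa [poisCdf, Function.comp] using this
  obtain ⟨n, hn⟩ := this.exists
  exact ⟨n, hn.le⟩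

lemma poisCdf_tail {l : ℝ} (hl : 0 ≤ l) (n : ℕ) :
    1 - poisCdf l n ≤ l ^ (n+1) / (Nat.factorial (n+1)) := by
  have h := exp_hasSum l
  have hsplit := Summable.sum_add_tsum_nat_add (n+1) h.summable
  rw [h.tsum_eq] at hsplit
  have h1 : 1 - poisCdf l n = ∑' k, Real.exp (-l) * l ^ (k + (n+1)) / (Nat.factorial (k + (n+1))) := by
    rw [poisCdf]; linarith [hsplit]
  rw [h1]
  have hb : ∀ k : ℕ, Real.exp (-l) * l ^ (k + (n+1)) / (Nat.factorial (k + (n+1)))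
      ≤ (l ^ (n+1) / (Nat.factorial (n+1))) * (Real.exp (-l) * l ^ k / (Nat.factorial k)) := by
    intro k
    have hdvd := Nat.factorial_mul_factorial_dvd_factorial_add k (n+1)
    have hle : ((Nat.factorial k * Nat.factorial (n+1) : ℕ) : ℝ) ≤ (Nat.factorial (k + (n+1)) : ℝ) := by
      exact_mod_cast Nat.le_of_dvd (Nat.factorial_pos _) hdvd
    have step : Real.exp (-l) * l ^ (k + (n+1)) / (Nat.factorial (k + (n+1)))
        ≤ Real.exp (-l) * l ^ (k + (n+1)) / ((Nat.factorial k * Nat.factorial (n+1) : ℕ) : ℝ) := by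
      gcongr
      all_goals first
        | positivity
        | exact_mod_cast Nat.mul_pos (Nat.factorial_pos k) (Nat.factorial_pos (n+1))
    refine step.trans_eq ?_
    push_cast
    rw [pow_add]
    field_simp
  have hsum2 : Summable (fun k => (l ^ (n+1) / (Nat.factorial (n+1))) * (Real.exp (-l) * l ^ k / (Nat.factorial k))) :=
    h.summable.mul_left _
  have hsum1 : Summable (fun k => Real.exp (-l) * l ^ (k + (n+1)) / (Nat.factorial (k + (n+1)))) := by
    exact (summable_nat_add_iff (n+1)).mpr h.summable
  calc ∑' k, Real.exp (-l) * l ^ (k + (n+1)) / (Nat.factorial (k + (n+1)))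
      ≤ ∑' k, (l ^ (n+1) / (Nat.factorial (n+1))) * (Real.exp (-l) * l ^ k / (Nat.factorial k)) :=
        Summable.tsum_le_tsum hb hsum1 hsum2
    _ = (l ^ (n+1) / (Nat.factorial (n+1))) * 1 := by rw [tsum_mul_left, h.tsum_eq]
    _ = _ := mul_one _

lemma unif_qt_gt {l : ℝ} (hl : 0 ≤ l) (n : ℕ) :
    unif {u : ℝ | n < qt (poisCdf l) u} ≤ ENNReal.ofReal (l ^ (n+1) / (Nat.factorial (n+1))) := by
  have hmono := poisCdf_mono l hl
  have hms : MeasurableSet {u : ℝ | n < qt (poisCdf l) u} :=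
    qt_measurable hmono measurableSet_Ioi
  rw [unif, Measure.restrict_apply hms]
  have hsub : {u : ℝ | n < qt (poisCdf l) u} ∩ Set.Ioo 0 1 ⊆ Set.Ioo (poisCdf l n) 1 := by
    rintro u ⟨hu, hu0, hu1⟩
    refine ⟨?_, hu1⟩
    by_contra hc
    push_neg at hc
    have : qt (poisCdf l) u ≤ n := Nat.sInf_le hc
    simp only [Set.mem_setOf_eq] at hu
    omega
  calc volume ({u : ℝ | n < qt (poisCdf l) u} ∩ Set.Ioo 0 1)
      ≤ volume (Set.Ioo (poisCdf l n) 1) := measure_mono hsub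
    _ = ENNReal.ofReal (1 - poisCdf l n) := Real.volume_Ioo
    _ ≤ _ := ENNReal.ofReal_le_ofReal (poisCdf_tail hl n)

lemma sum_odd (N : ℕ) : ∑ n ∈ Finset.range N, (2*n+1) = N^2 := by
  induction N with
  | zero => simp
  | succ m ih => rw [Finset.sum_range_succ, ih]; ring

lemma sq_layer (N : ℕ) :
    ((N : ℝ≥0∞))^2 = ∑' n : ℕ, if n < N then ((2*n+1 : ℕ) : ℝ≥0∞) else 0 := by
  rw [tsum_eq_sum (s := Finset.range N) (by intro n hn; rw [if_neg]; simpa using hn)]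
  rw [Finset.sum_congr rfl (fun k hk => if_pos (Finset.mem_range.mp hk))]
  rw [← Nat.cast_sum, sum_odd]
  push_cast
  ring

lemma summable_odd_fact {l : ℝ} (hl : 0 ≤ l) :
    Summable (fun n : ℕ => ((2*n+1 : ℕ) : ℝ) * (l ^ (n+1) / (Nat.factorial (n+1)))) := by
  have hsum : Summable (fun n : ℕ => (2*l) * (l ^ n / (Nat.factorial n))) :=
    (Real.summable_pow_div_factorial l).mul_left (2*l)
  refine Summable.of_nonneg_of_le (fun n => by positivity) (fun n => ?_) hsum
  have h1 : ((2*n+1 : ℕ) : ℝ) * (l ^ (n+1) / (Nat.factorial (n+1)))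
      ≤ (2*((n:ℝ)+1)) * (l ^ (n+1) / (Nat.factorial (n+1))) := by
    gcongr
    all_goals first
      | positivity
      | (push_cast; linarith)
  refine h1.trans_eq ?_
  have hn : ((Nat.factorial n : ℕ) : ℝ) ≠ 0 := by
    exact_mod_cast (Nat.factorial_pos n).ne'
  rw [Nat.factorial_succ, pow_succ]
  push_cast
  field_simp

lemma lintegral_qt_sq {l : ℝ} (hl : 0 ≤ l) :
    ∫⁻ u, ((qt (poisCdf l) u : ℝ≥0∞))^2 ∂unif < ⊤ := by
  have hmeas := qt_measurable (poisCdf_mono l hl)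
  have hset : ∀ n : ℕ, MeasurableSet {u : ℝ | n < qt (poisCdf l) u} :=
    fun n => hmeas measurableSet_Ioi
  have step1 : ∫⁻ u, ((qt (poisCdf l) u : ℝ≥0∞))^2 ∂unif
      = ∑' n : ℕ, ∫⁻ u, (if n < qt (poisCdf l) u then ((2*n+1 : ℕ) : ℝ≥0∞) else 0) ∂unif := by
    rw [← lintegral_tsum]
    · exact lintegral_congr (fun u => sq_layer _)
    · intro n
      exact (Measurable.ite (hset n) measurable_const measurable_const).aemeasurable
  have step2 : ∀ n : ℕ, ∫⁻ u, (if n < qt (poisCdf l) u then ((2*n+1 : ℕ) : ℝ≥0∞) else 0) ∂unif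
      = ((2*n+1 : ℕ) : ℝ≥0∞) * unif {u : ℝ | n < qt (poisCdf l) u} := by
    intro n
    have : (fun u : ℝ => if n < qt (poisCdf l) u then ((2*n+1 : ℕ) : ℝ≥0∞) else 0)
        = Set.indicator {u : ℝ | n < qt (poisCdf l) u} (fun _ => ((2*n+1 : ℕ) : ℝ≥0∞)) := by
      ext u
      rw [Set.indicator_apply]
      rfl
    rw [this, lintegral_indicator (hset n), setLIntegral_const]
  rw [step1]
  have step3 : ∑' n : ℕ, ∫⁻ u, (if n < qt (poisCdf l) u then ((2*n+1 : ℕ) : ℝ≥0∞) else 0) ∂unif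
      ≤ ∑' n : ℕ, ENNReal.ofReal (((2*n+1 : ℕ) : ℝ) * (l ^ (n+1) / (Nat.factorial (n+1)))) := by
    refine ENNReal.tsum_le_tsum (fun n => ?_)
    rw [step2 n]
    calc ((2*n+1 : ℕ) : ℝ≥0∞) * unif {u : ℝ | n < qt (poisCdf l) u}
        ≤ ((2*n+1 : ℕ) : ℝ≥0∞) * ENNReal.ofReal (l ^ (n+1) / (Nat.factorial (n+1))) := by
          gcongr
          exact unif_qt_gt hl n
      _ = ENNReal.ofReal (((2*n+1 : ℕ) : ℝ) * (l ^ (n+1) / (Nat.factorial (n+1)))) := by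
          rw [ENNReal.ofReal_mul (by positivity), ENNReal.ofReal_natCast]
  refine lt_of_le_of_lt step3 ?_
  rw [← ENNReal.ofReal_tsum_of_nonneg (fun n => by positivity) (summable_odd_fact hl)]
  exact ENNReal.ofReal_lt_top

lemma qt_aesm {l : ℝ} (hl : 0 ≤ l) :
    AEStronglyMeasurable (fun u => ((qt (poisCdf l) u : ℕ) : ℝ)) unif :=
  (measurable_from_nat.comp (qt_measurable (poisCdf_mono l hl))).aestronglyMeasurable

lemma nnnorm_natCast_real (n : ℕ) : ((‖((n : ℕ) : ℝ)‖₊ : ℝ≥0) : ℝ≥0∞) = (n : ℝ≥0∞) := by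
  simp

lemma qt_mul_integrable {l l' : ℝ} (hl : 0 ≤ l) (hl' : 0 ≤ l') :
    Integrable (fun u => ((qt (poisCdf l) u : ℕ) : ℝ) * ((qt (poisCdf l') u : ℕ) : ℝ)) unif := by
  refine ⟨(qt_aesm hl).mul (qt_aesm hl'), ?_⟩
  show (∫⁻ u, ((‖((qt (poisCdf l) u : ℕ) : ℝ) * ((qt (poisCdf l') u : ℕ) : ℝ)‖₊ : ℝ≥0) : ℝ≥0∞) ∂unif) < ⊤
  have hpt : ∀ u : ℝ, ((‖((qt (poisCdf l) u : ℕ) : ℝ) * ((qt (poisCdf l') u : ℕ) : ℝ)‖₊ : ℝ≥0) : ℝ≥0∞)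
      ≤ ((qt (poisCdf l) u : ℝ≥0∞))^2 + ((qt (poisCdf l') u : ℝ≥0∞))^2 := by
    intro u
    set a := (qt (poisCdf l) u : ℝ≥0∞)
    set b := (qt (poisCdf l') u : ℝ≥0∞)
    have : ((‖((qt (poisCdf l) u : ℕ) : ℝ) * ((qt (poisCdf l') u : ℕ) : ℝ)‖₊ : ℝ≥0) : ℝ≥0∞) = a * b := by
      rw [nnnorm_mul]
      push_cast
      rw [nnnorm_natCast_real, nnnorm_natCast_real]
    rw [this]
    rcases le_total a b with hab | hab
    · calc a * b ≤ b * b := by gcongr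
        _ = b^2 := (sq b).symm
        _ ≤ a^2 + b^2 := le_add_self
    · calc a * b ≤ a * a := by gcongr
        _ = a^2 := (sq a).symm
        _ ≤ a^2 + b^2 := le_add_right (le_refl _)
  calc ∫⁻ u, ((‖((qt (poisCdf l) u : ℕ) : ℝ) * ((qt (poisCdf l') u : ℕ) : ℝ)‖₊ : ℝ≥0) : ℝ≥0∞) ∂unif
      ≤ ∫⁻ u, (((qt (poisCdf l) u : ℝ≥0∞))^2 + ((qt (poisCdf l') u : ℝ≥0∞))^2) ∂unif :=
        lintegral_mono hpt
    _ = ∫⁻ u, ((qt (poisCdf l) u : ℝ≥0∞))^2 ∂unif + ∫⁻ u, ((qt (poisCdf l') u : ℝ≥0∞))^2 ∂unif := by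
        refine lintegral_add_left ?_ _
        exact ((measurable_from_nat.comp (qt_measurable (poisCdf_mono l hl))).pow_const 2)
    _ < ⊤ := ENNReal.add_lt_top.mpr ⟨lintegral_qt_sq hl, lintegral_qt_sq hl'⟩

lemma qt_integrable {l : ℝ} (hl : 0 ≤ l) :
    Integrable (fun u => ((qt (poisCdf l) u : ℕ) : ℝ)) unif := by
  refine ⟨qt_aesm hl, ?_⟩
  show (∫⁻ u, ((‖((qt (poisCdf l) u : ℕ) : ℝ)‖₊ : ℝ≥0) : ℝ≥0∞) ∂unif) < ⊤
  have hpt : ∀ u : ℝ, ((‖((qt (poisCdf l) u : ℕ) : ℝ)‖₊ : ℝ≥0) : ℝ≥0∞)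
      ≤ ((qt (poisCdf l) u : ℝ≥0∞))^2 + 1 := by
    intro u
    rw [nnnorm_natCast_real]
    set n := qt (poisCdf l) u
    have hn : n ≤ n^2 + 1 := by nlinarith
    calc (n : ℝ≥0∞) ≤ ((n^2 + 1 : ℕ) : ℝ≥0∞) := by exact_mod_cast hn
      _ = (n : ℝ≥0∞)^2 + 1 := by push_cast; ring
  calc ∫⁻ u, ((‖((qt (poisCdf l) u : ℕ) : ℝ)‖₊ : ℝ≥0) : ℝ≥0∞) ∂unif
      ≤ ∫⁻ u, (((qt (poisCdf l) u : ℝ≥0∞))^2 + 1) ∂unif := lintegral_mono hpt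
    _ = ∫⁻ u, ((qt (poisCdf l) u : ℝ≥0∞))^2 ∂unif + ∫⁻ _, (1:ℝ≥0∞) ∂unif := by
        refine lintegral_add_left ?_ _
        exact ((measurable_from_nat.comp (qt_measurable (poisCdf_mono l hl))).pow_const 2)
    _ < ⊤ := by
        refine ENNReal.add_lt_top.mpr ⟨lintegral_qt_sq hl, ?_⟩
        rw [lintegral_one]
        exact measure_lt_top unif Set.univ

lemma unif_ae_mem : ∀ᵐ x ∂unif, x ∈ Set.Ioo (0:ℝ) 1 :=
  ae_restrict_mem measurableSet_Ioo

lemma prod_ae_mem : ∀ᵐ z : ℝ × ℝ ∂(unif.prod unif),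
    z.1 ∈ Set.Ioo (0:ℝ) 1 ∧ z.2 ∈ Set.Ioo (0:ℝ) 1 := by
  have h1 : ∀ᵐ z : ℝ × ℝ ∂(unif.prod unif), z.1 ∈ Set.Ioo (0:ℝ) 1 := by
    rw [ae_iff]
    have : {z : ℝ × ℝ | ¬ z.1 ∈ Set.Ioo (0:ℝ) 1} = (Set.Ioo (0:ℝ) 1)ᶜ ×ˢ (Set.univ : Set ℝ) := by
      ext z; simp
    rw [this, Measure.prod_prod]
    have : unif (Set.Ioo (0:ℝ) 1)ᶜ = 0 := by
      rw [unif, Measure.restrict_apply (measurableSet_Ioo.compl)]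
      simp
    rw [this, zero_mul]
  have h2 : ∀ᵐ z : ℝ × ℝ ∂(unif.prod unif), z.2 ∈ Set.Ioo (0:ℝ) 1 := by
    rw [ae_iff]
    have : {z : ℝ × ℝ | ¬ z.2 ∈ Set.Ioo (0:ℝ) 1} = (Set.univ : Set ℝ) ×ˢ (Set.Ioo (0:ℝ) 1)ᶜ := by
      ext z; simp
    rw [this, Measure.prod_prod]
    have : unif (Set.Ioo (0:ℝ) 1)ᶜ = 0 := by
      rw [unif, Measure.restrict_apply (measurableSet_Ioo.compl)]
      simp
    rw [this, mul_zero]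
  exact h1.and h2

lemma chebyshev_unif {f g : ℝ → ℝ} (hfm : MonotoneOn f (Set.Ioo 0 1)) (hgm : MonotoneOn g (Set.Ioo 0 1))
    (hf : Integrable f unif) (hg : Integrable g unif) (hfg : Integrable (fun x => f x * g x) unif) :
    (∫ x, f x ∂unif) * (∫ x, g x ∂unif) ≤ ∫ x, f x * g x ∂unif := by
  set ν := unif.prod unif with hν
  have key : 0 ≤ ∫ z : ℝ × ℝ, (f z.1 - f z.2) * (g z.1 - g z.2) ∂ν := by
    refine integral_nonneg_of_ae ?_
    filter_upwards [prod_ae_mem] with z hz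
    show (0:ℝ) ≤ (f z.1 - f z.2) * (g z.1 - g z.2)
    rcases le_total z.1 z.2 with h | h
    · nlinarith [hfm hz.1 hz.2 h, hgm hz.1 hz.2 h]
    · nlinarith [hfm hz.2 hz.1 h, hgm hz.2 hz.1 h]
  have hA : Integrable (fun z : ℝ × ℝ => f z.1 * g z.1) ν := by
    simpa using hfg.mul_prod (integrable_const (1:ℝ))
  have hB : Integrable (fun z : ℝ × ℝ => f z.2 * g z.2) ν := by
    simpa using (integrable_const (1:ℝ)).mul_prod hfg
  have hC : Integrable (fun z : ℝ × ℝ => f z.1 * g z.2) ν := hf.mul_prod hg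
  have hD : Integrable (fun z : ℝ × ℝ => g z.1 * f z.2) ν := hg.mul_prod hf
  have expand : ∫ z : ℝ × ℝ, (f z.1 - f z.2) * (g z.1 - g z.2) ∂ν
      = (∫ z : ℝ × ℝ, f z.1 * g z.1 ∂ν + ∫ z : ℝ × ℝ, f z.2 * g z.2 ∂ν)
        - (∫ z : ℝ × ℝ, f z.1 * g z.2 ∂ν + ∫ z : ℝ × ℝ, g z.1 * f z.2 ∂ν) := by
    have e : (fun z : ℝ × ℝ => (f z.1 - f z.2) * (g z.1 - g z.2))
        = (fun z : ℝ × ℝ => (f z.1 * g z.1 + f z.2 * g z.2) - (f z.1 * g z.2 + g z.1 * f z.2)) := by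
      ext z; ring
    have hAB : Integrable (fun z : ℝ × ℝ => f z.1 * g z.1 + f z.2 * g z.2) ν := hA.add hB
    have hCD : Integrable (fun z : ℝ × ℝ => f z.1 * g z.2 + g z.1 * f z.2) ν := hC.add hD
    rw [e, integral_sub hAB hCD, integral_add hA hB, integral_add hC hD]
  have h1 : ∫ z : ℝ × ℝ, f z.1 * g z.1 ∂ν = ∫ x, f x * g x ∂unif := by
    have := integral_prod_mul (μ := unif) (ν := unif) (fun x => f x * g x) (fun _ => (1:ℝ))
    simpa using this
  have h2 : ∫ z : ℝ × ℝ, f z.2 * g z.2 ∂ν = ∫ x, f x * g x ∂unif := by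
    have := integral_prod_mul (μ := unif) (ν := unif) (fun _ => (1:ℝ)) (fun x => f x * g x)
    simpa using this
  have h3 : ∫ z : ℝ × ℝ, f z.1 * g z.2 ∂ν = (∫ x, f x ∂unif) * (∫ x, g x ∂unif) :=
    integral_prod_mul f g
  have h4 : ∫ z : ℝ × ℝ, g z.1 * f z.2 ∂ν = (∫ x, g x ∂unif) * (∫ x, f x ∂unif) :=
    integral_prod_mul g f
  rw [expand, h1, h2, h3, h4] at key
  linarith

lemma pi_integrable {n : ℕ} (μ : Measure ℝ) [SigmaFinite μ] {f : Fin n → ℝ → ℝ}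
    (hf : ∀ i, Integrable (f i) μ) :
    Integrable (fun x : Fin n → ℝ => ∏ i, f i (x i)) (Measure.pi fun _ => μ) := by
  induction n with
  | zero =>
    simp only [Finset.univ_eq_empty, Finset.prod_empty, integrable_const_iff, one_ne_zero,
      Measure.pi_empty_univ, ENNReal.one_lt_top, or_true, false_or]
    exact ⟨by rw [Measure.pi_empty_univ]; exact ENNReal.one_lt_top⟩
  | succ m ih =>
    have h := (measurePreserving_piFinSuccAbove (fun _ : Fin (m+1) => μ) 0).symm
    rw [← h.integrable_comp_emb (MeasurableEquiv.measurableEmbedding _)]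
    simp_rw [MeasurableEquiv.piFinSuccAbove_symm_apply, Fin.insertNthEquiv,
      Fin.prod_univ_succ, Fin.insertNth_zero]
    simp only [Fin.zero_succAbove, Function.comp_def, Fin.cons_zero, Fin.cons_succ,
      Equiv.coe_fn_mk]
    exact (hf 0).mul_prod (ih fun i => hf i.succ)

lemma pi_integral {n : ℕ} (μ : Measure ℝ) [SigmaFinite μ] (f : Fin n → ℝ → ℝ) :
    ∫ x : Fin n → ℝ, ∏ i, f i (x i) ∂(Measure.pi fun _ => μ) = ∏ i, ∫ x, f i x ∂μ := by
  induction n with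
  | zero =>
    simp only [Finset.univ_eq_empty, Finset.prod_empty, integral_const,
      measureReal_def, Measure.pi_empty_univ, ENNReal.toReal_one, smul_eq_mul, mul_one, one_smul]
  | succ m ih =>
    calc
      _ = ∫ x : ℝ × (Fin m → ℝ),
          f 0 x.1 * ∏ i : Fin m, f i.succ (x.2 i) ∂(μ.prod (Measure.pi fun _ => μ)) := by
        rw [← ((measurePreserving_piFinSuccAbove (fun _ : Fin (m+1) => μ) 0).symm).integral_comp']
        refine integral_congr_ae (Filter.Eventually.of_forall fun x => ?_)
        show (∏ i : Fin (m+1), f i ((MeasurableEquiv.piFinSuccAbove (fun _ => ℝ) 0).symm x i))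
            = f 0 x.1 * ∏ i : Fin m, f i.succ (x.2 i)
        rw [Fin.prod_univ_succ]
        simp [MeasurableEquiv.piFinSuccAbove_symm_apply, Fin.insertNthEquiv, Fin.insertNth_zero,
          Fin.zero_succAbove]
      _ = (∫ x, f 0 x ∂μ) * ∏ i : Fin m, ∫ x, f i.succ x ∂μ := by
        rw [← ih (fun i => f i.succ), ← integral_prod_mul]
      _ = ∏ i, ∫ x, f i x ∂μ := by rw [Fin.prod_univ_succ]

lemma coord_prod_eq {d : ℕ} (k : Fin d) (φ : ℝ → ℝ) (u : Fin d → ℝ) :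
    (∏ r : Fin d, (if r = k then φ else fun _ => (1:ℝ)) (u r)) = φ (u k) := by
  have h : ∀ r : Fin d, (if r = k then φ else fun _ => (1:ℝ)) (u r)
      = if r = k then φ (u r) else 1 := fun r => by split_ifs <;> rfl
  rw [Finset.prod_congr rfl (fun r _ => h r), Finset.prod_ite_eq' Finset.univ k
    (fun r => φ (u r)), if_pos (Finset.mem_univ k)]

lemma coord_integrable {d : ℕ} (k : Fin d) {φ : ℝ → ℝ} (hφ : Integrable φ unif) :
    Integrable (fun u : Fin d → ℝ => φ (u k)) (Measure.pi fun _ => unif) := by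
  have hf : ∀ r : Fin d, Integrable ((if r = k then φ else fun _ => (1:ℝ))) unif := fun r => by
    split_ifs
    · exact hφ
    · exact integrable_const 1
  have h := pi_integrable unif hf
  have he : (fun u : Fin d → ℝ => φ (u k))
      = fun u : Fin d → ℝ => ∏ r : Fin d, (if r = k then φ else fun _ => (1:ℝ)) (u r) := by
    ext u
    rw [coord_prod_eq]
  rw [he]
  exact h

lemma coord_integral {d : ℕ} (k : Fin d) (φ : ℝ → ℝ) :
    ∫ u : Fin d → ℝ, φ (u k) ∂(Measure.pi fun _ => unif) = ∫ x, φ x ∂unif := by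
  have he : (fun u : Fin d → ℝ => φ (u k))
      = fun u : Fin d → ℝ => ∏ r : Fin d, (if r = k then φ else fun _ => (1:ℝ)) (u r) := by
    ext u
    rw [coord_prod_eq]
  rw [he, pi_integral unif]
  have h : ∀ r : Fin d, (∫ x, (if r = k then φ else fun _ => (1:ℝ)) x ∂unif)
      = if r = k then (∫ x, φ x ∂unif) else 1 := fun r => by
    split_ifs
    · rfl
    · simp
  rw [Finset.prod_congr rfl (fun r _ => h r), Finset.prod_ite_eq' Finset.univ k
    (fun _ => ∫ x, φ x ∂unif), if_pos (Finset.mem_univ k)]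

lemma coord2_prod_eq {d : ℕ} {k m : Fin d} (hkm : k ≠ m) (φ ψ : ℝ → ℝ) (u : Fin d → ℝ) :
    (∏ r : Fin d, (if r = k then φ else if r = m then ψ else fun _ => (1:ℝ)) (u r))
      = φ (u k) * ψ (u m) := by
  have h : ∀ r : Fin d, (if r = k then φ else if r = m then ψ else fun _ => (1:ℝ)) (u r)
      = (if r = k then φ (u r) else 1) * (if r = m then ψ (u r) else 1) := by
    intro r
    rcases eq_or_ne r k with h1 | h1
    · rw [if_pos h1, if_pos h1, if_neg (h1 ▸ hkm), mul_one]
    · rw [if_neg h1, if_neg h1, one_mul]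
      split_ifs <;> rfl
  rw [Finset.prod_congr rfl (fun r _ => h r), Finset.prod_mul_distrib,
    Finset.prod_ite_eq' Finset.univ k (fun r => φ (u r)), if_pos (Finset.mem_univ k),
    Finset.prod_ite_eq' Finset.univ m (fun r => ψ (u r)), if_pos (Finset.mem_univ m)]

lemma coord2_integrable {d : ℕ} {k m : Fin d} (hkm : k ≠ m) {φ ψ : ℝ → ℝ}
    (hφ : Integrable φ unif) (hψ : Integrable ψ unif) :
    Integrable (fun u : Fin d → ℝ => φ (u k) * ψ (u m)) (Measure.pi fun _ => unif) := by
  have hf : ∀ r : Fin d,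
      Integrable ((if r = k then φ else if r = m then ψ else fun _ => (1:ℝ))) unif := fun r => by
    split_ifs
    · exact hφ
    · exact hψ
    · exact integrable_const 1
  have h := pi_integrable unif hf
  have he : (fun u : Fin d → ℝ => φ (u k) * ψ (u m))
      = fun u : Fin d → ℝ =>
        ∏ r : Fin d, (if r = k then φ else if r = m then ψ else fun _ => (1:ℝ)) (u r) := by
    ext u
    rw [coord2_prod_eq hkm]
  rw [he]
  exact h

lemma coord2_integral {d : ℕ} {k m : Fin d} (hkm : k ≠ m) (φ ψ : ℝ → ℝ) :
    ∫ u : Fin d → ℝ, φ (u k) * ψ (u m) ∂(Measure.pi fun _ => unif)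
      = (∫ x, φ x ∂unif) * (∫ x, ψ x ∂unif) := by
  have he : (fun u : Fin d → ℝ => φ (u k) * ψ (u m))
      = fun u : Fin d → ℝ =>
        ∏ r : Fin d, (if r = k then φ else if r = m then ψ else fun _ => (1:ℝ)) (u r) := by
    ext u
    rw [coord2_prod_eq hkm]
  rw [he, pi_integral unif]
  have h : ∀ r : Fin d, (∫ x, (if r = k then φ else if r = m then ψ else fun _ => (1:ℝ)) x ∂unif)
      = (if r = k then (∫ x, φ x ∂unif) else 1) * (if r = m then (∫ x, ψ x ∂unif) else 1) := by
    intro r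
    rcases eq_or_ne r k with h1 | h1
    · rw [if_pos h1, if_pos h1, if_neg (h1 ▸ hkm), mul_one]
    · rw [if_neg h1, if_neg h1, one_mul]
      split_ifs
      · rfl
      · simp
  rw [Finset.prod_congr rfl (fun r _ => h r), Finset.prod_mul_distrib,
    Finset.prod_ite_eq' Finset.univ k (fun _ => ∫ x, φ x ∂unif), if_pos (Finset.mem_univ k),
    Finset.prod_ite_eq' Finset.univ m (fun _ => ∫ x, ψ x ∂unif), if_pos (Finset.mem_univ m)]

/-- In the MP_d(Λ,Ω) model, all pairwise covariances are nonnegative: the model can only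
exhibit positive dependence. -/
theorem mp_cov_nonneg (d : ℕ) (hd : 2 ≤ d)
    (lam : Fin d → ℝ) (hlam : ∀ r, 0 < lam r)
    (om : Fin d → Fin d → ℝ)
    (hom0 : ∀ r s : Fin d, s ≤ r → 0 ≤ om r s)
    (hom1 : ∀ r s : Fin d, s ≤ r → om r s ≤ 1)
    (h11 : om ⟨0, by omega⟩ ⟨0, by omega⟩ = 1)
    (hsum : ∀ r : Fin d, ∑ s ∈ Finset.Iic r, om r s = 1)
    (i j : Fin d) (hij : i < j) :
    (∫ u, (mpX d lam om i u : ℝ) ∂(pmeas d)) * (∫ u, (mpX d lam om j u : ℝ) ∂(pmeas d))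
      ≤ ∫ u, (mpX d lam om i u : ℝ) * (mpX d lam om j u : ℝ) ∂(pmeas d) := by
  classical
  have hpm : pmeas d = (Measure.pi fun _ => unif) := rfl
  set I := Finset.Iic i with hI
  set J := Finset.Iic j with hJ
  set f : Fin d → ℝ → ℝ := fun k x => ((qt (poisCdf (om i k * lam i)) x : ℕ) : ℝ) with hf
  set g : Fin d → ℝ → ℝ := fun m x => ((qt (poisCdf (om j m * lam j)) x : ℕ) : ℝ) with hg
  have hfnn : ∀ k ∈ I, 0 ≤ om i k * lam i := fun k hk =>
    mul_nonneg (hom0 i k (Finset.mem_Iic.mp hk)) (hlam i).le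
  have hgnn : ∀ m ∈ J, 0 ≤ om j m * lam j := fun m hm =>
    mul_nonneg (hom0 j m (Finset.mem_Iic.mp hm)) (hlam j).le
  have hfint : ∀ k ∈ I, Integrable (f k) unif := fun k hk => qt_integrable (hfnn k hk)
  have hgint : ∀ m ∈ J, Integrable (g m) unif := fun m hm => qt_integrable (hgnn m hm)
  have hIi : ∫ u, (mpX d lam om i u : ℝ) ∂(pmeas d) = ∑ k ∈ I, ∫ x, f k x ∂unif := by
    calc ∫ u, (mpX d lam om i u : ℝ) ∂(pmeas d)
        = ∫ u : Fin d → ℝ, (∑ k ∈ I, f k (u k)) ∂(Measure.pi fun _ => unif) := by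
          rw [hpm]
          refine integral_congr_ae (Filter.Eventually.of_forall fun u => ?_)
          simp only [mpX]
          push_cast
          rfl
      _ = ∑ k ∈ I, ∫ u : Fin d → ℝ, f k (u k) ∂(Measure.pi fun _ => unif) :=
          integral_finset_sum I (fun k hk => coord_integrable k (hfint k hk))
      _ = ∑ k ∈ I, ∫ x, f k x ∂unif :=
          Finset.sum_congr rfl fun k _ => coord_integral k (f k)
  have hIj : ∫ u, (mpX d lam om j u : ℝ) ∂(pmeas d) = ∑ m ∈ J, ∫ x, g m x ∂unif := by
    calc ∫ u, (mpX d lam om j u : ℝ) ∂(pmeas d)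
        = ∫ u : Fin d → ℝ, (∑ m ∈ J, g m (u m)) ∂(Measure.pi fun _ => unif) := by
          rw [hpm]
          refine integral_congr_ae (Filter.Eventually.of_forall fun u => ?_)
          simp only [mpX]
          push_cast
          rfl
      _ = ∑ m ∈ J, ∫ u : Fin d → ℝ, g m (u m) ∂(Measure.pi fun _ => unif) :=
          integral_finset_sum J (fun m hm => coord_integrable m (hgint m hm))
      _ = ∑ m ∈ J, ∫ x, g m x ∂unif :=
          Finset.sum_congr rfl fun m _ => coord_integral m (g m)
  have hterm_int : ∀ k ∈ I, ∀ m ∈ J,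
      Integrable (fun u : Fin d → ℝ => f k (u k) * g m (u m)) (Measure.pi fun _ => unif) := by
    intro k hk m hm
    rcases eq_or_ne k m with h | h
    · subst h
      exact coord_integrable k (qt_mul_integrable (hfnn k hk) (hgnn k hm))
    · exact coord2_integrable h (hfint k hk) (hgint m hm)
  have hprod : ∫ u, (mpX d lam om i u : ℝ) * (mpX d lam om j u : ℝ) ∂(pmeas d)
      = ∑ k ∈ I, ∑ m ∈ J, ∫ u : Fin d → ℝ, f k (u k) * g m (u m) ∂(Measure.pi fun _ => unif) := by
    calc ∫ u, (mpX d lam om i u : ℝ) * (mpX d lam om j u : ℝ) ∂(pmeas d)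
        = ∫ u : Fin d → ℝ, (∑ k ∈ I, ∑ m ∈ J, f k (u k) * g m (u m))
            ∂(Measure.pi fun _ => unif) := by
          rw [hpm]
          refine integral_congr_ae (Filter.Eventually.of_forall fun u => ?_)
          simp only [mpX]
          push_cast
          rw [Finset.sum_mul_sum]
      _ = ∑ k ∈ I, ∫ u : Fin d → ℝ, (∑ m ∈ J, f k (u k) * g m (u m))
            ∂(Measure.pi fun _ => unif) :=
          integral_finset_sum I (fun k hk =>
            integrable_finset_sum J (fun m hm => hterm_int k hk m hm))
      _ = ∑ k ∈ I, ∑ m ∈ J, ∫ u : Fin d → ℝ, f k (u k) * g m (u m)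
            ∂(Measure.pi fun _ => unif) :=
          Finset.sum_congr rfl fun k hk =>
            integral_finset_sum J (fun m hm => hterm_int k hk m hm)
  rw [hIi, hIj, hprod, Finset.sum_mul_sum]
  refine Finset.sum_le_sum fun k hk => Finset.sum_le_sum fun m hm => ?_
  rcases eq_or_ne k m with h | h
  · subst h
    have heq : ∫ u : Fin d → ℝ, f k (u k) * g k (u k) ∂(Measure.pi fun _ => unif)
        = ∫ x, f k x * g k x ∂unif := coord_integral k (fun x => f k x * g k x)
    rw [heq]
    have hmf : MonotoneOn (f k) (Set.Ioo 0 1) :=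
      qt_monoOn (poisCdf_mono _ (hfnn k hk)) (fun u hu => poisCdf_nonempty (hfnn k hk) hu.2)
    have hmg : MonotoneOn (g k) (Set.Ioo 0 1) :=
      qt_monoOn (poisCdf_mono _ (hgnn k hm)) (fun u hu => poisCdf_nonempty (hgnn k hm) hu.2)
    exact chebyshev_unif hmf hmg (hfint k hk) (hgint k hm)
      (qt_mul_integrable (hfnn k hk) (hgnn k hm))
  · rw [coord2_integral h (f k) (g m)]
end

section
/- Trivariate model pmf: let λ_1, λ_2, λ_3 > 0 and weights ω_{21}, ω_{31}, ω_{32} ∈ [0,1] with ω_{21} ≤ 1 and ω_{31} + ω_{32} ≤ 1; set ω_{22} = 1 − ω_{21} and ω_{33} = 1 − ω_{31} − ω_{32}. On (0,1)^3 with the product measure μ^3 define X_1(u) = q_{λ_1}(u_1), X_2(u) = q_{ω_{21}λ_2}(u_1) + q_{ω_{22}λ_2}(u_2), X_3(u) = q_{ω_{31}λ_3}(u_1) + q_{ω_{32}λ_3}(u_2) + q_{ω_{33}λ_3}(u_3). Then for all x_1, x_2, x_3 ∈ ℕ, μ^3{u : X_1 = x_1, X_2 = x_2, X_3 = x_3}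 = Σ_{z_{22}=0}^{x_2} Σ_{z_{32}=0}^{x_3} Σ_{z_{33}=0}^{x_3−z_{32}} c_3(x_1, x_2 − z_{22}, x_3 − z_{32} − z_{33}) · c_2(z_{22}, z_{32}) · g_{ω_{33}λ_3}(z_{33}), where c_3(y_1,y_2,y_3) = max(0, min{G_{λ_1}(y_1), G_{ω_{21}λ_2}(y_2), G_{ω_{31}λ_3}(y_3)} − max{G_{λ_1}(y_1−1), G_{ω_{21}λ_2}(y_2−1), G_{ω_{31}λ_3}(y_3−1)}), c_2(y_1,y_2) = max(0, min{G_{ω_{22}λ_2}(y_1), G_{ω_{32}λ_3}(y_2)} − max{G_{ω_{22}λ_2}(y_1−1), G_{ω_{32}λ_3}(y_2−1)}), with the convention G(−1) = 0, and g_θ(z) = e^{−θ} θ^z / z!. -/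
open MeasureTheory

set_option linter.dupNamespace false

namespace MP3Aux

open Set

lemma poisPmf_nonneg {l : ℝ} (hl : 0 ≤ l) (n : ℕ) : 0 ≤ poisPmf l n := by
  unfold poisPmf; positivity

lemma poisCdf_succ (l : ℝ) (n : ℕ) : poisCdf l (n + 1) = poisCdf l n + poisPmf l (n + 1) := by
  unfold poisCdf poisPmf
  rw [Finset.sum_range_succ]

lemma poisCdf_zero (l : ℝ) : poisCdf l 0 = poisPmf l 0 := by
  unfold poisCdf poisPmf
  simp [Finset.sum_range_one]

lemma poisCdf_sub_cdfm1 {l : ℝ} (n : ℕ) :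
    poisCdf l n - cdfm1 (poisCdf l) n = poisPmf l n := by
  cases n with
  | zero => simp [cdfm1, poisCdf_zero]
  | succ m => simp [cdfm1, poisCdf_succ]

lemma poisCdf_nonneg {l : ℝ} (hl : 0 ≤ l) (n : ℕ) : 0 ≤ poisCdf l n :=
  Finset.sum_nonneg fun k _ => by positivity

lemma poisCdf_mono {l : ℝ} (hl : 0 ≤ l) : Monotone (poisCdf l) := by
  apply monotone_nat_of_le_succ
  intro n
  rw [poisCdf_succ]
  have := poisPmf_nonneg hl (n + 1)
  linarith

lemma cdfm1_nonneg {l : ℝ} (hl : 0 ≤ l) (n : ℕ) : 0 ≤ cdfm1 (poisCdf l) n := by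
  unfold cdfm1
  split
  · exact le_refl 0
  · exact poisCdf_nonneg hl _

lemma poisCdf_le_one {l : ℝ} (hl : 0 ≤ l) (n : ℕ) : poisCdf l n ≤ 1 := by
  unfold poisCdf
  have h1 : ∑ k ∈ Finset.range (n + 1), Real.exp (-l) * l ^ k / (Nat.factorial k)
      = Real.exp (-l) * ∑ k ∈ Finset.range (n + 1), l ^ k / (Nat.factorial k) := by
    rw [Finset.mul_sum]
    congr 1 with k
    ring
  rw [h1]
  have h2 : ∑ k ∈ Finset.range (n + 1), l ^ k / (Nat.factorial k) ≤ Real.exp l :=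
    Real.sum_le_exp_of_nonneg hl _
  calc Real.exp (-l) * ∑ k ∈ Finset.range (n + 1), l ^ k / (Nat.factorial k)
      ≤ Real.exp (-l) * Real.exp l := by
        exact mul_le_mul_of_nonneg_left h2 (Real.exp_nonneg _)
    _ = 1 := by rw [← Real.exp_add]; simp

lemma poisCdf_tendsto {l : ℝ} (hl : 0 ≤ l) :
    Filter.Tendsto (poisCdf l) Filter.atTop (nhds 1) := by
  have h : HasSum (fun k : ℕ => Real.exp (-l) * l ^ k / (Nat.factorial k)) 1 := by
    have := (NormedSpace.expSeries_div_hasSum_exp l).mul_left (Real.exp (-l))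
    rw [← Real.exp_eq_exp_ℝ] at this
    have heq : (fun k : ℕ => Real.exp (-l) * (l ^ k / (Nat.factorial k)))
        = fun k : ℕ => Real.exp (-l) * l ^ k / (Nat.factorial k) := by
      funext k; ring
    rw [heq] at this
    have : HasSum (fun k : ℕ => Real.exp (-l) * l ^ k / (Nat.factorial k))
        (Real.exp (-l) * Real.exp l) := this
    simpa [← Real.exp_add] using this
  have h2 := h.tendsto_sum_nat
  have h3 : Filter.Tendsto (fun n : ℕ => n + 1) Filter.atTop Filter.atTop :=
    Filter.tendsto_add_atTop_nat 1
  exact h2.comp h3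

lemma exists_poisCdf_ge {l u : ℝ} (hl : 0 ≤ l) (hu : u < 1) : ∃ m, u ≤ poisCdf l m := by
  have h : ∀ᶠ n in Filter.atTop, u ≤ poisCdf l n :=
    (poisCdf_tendsto hl).eventually (eventually_ge_nhds hu)
  exact h.exists

lemma qt_eq_iff {l : ℝ} (hl : 0 ≤ l) {u : ℝ} (hu : u ∈ Ioo (0:ℝ) 1) (n : ℕ) :
    qt (poisCdf l) u = n ↔ u ∈ Ioc (cdfm1 (poisCdf l) n) (poisCdf l n) := by
  obtain ⟨hu0, hu1⟩ := hu
  have hne : {m : ℕ | u ≤ poisCdf l m}.Nonempty := exists_poisCdf_ge hl hu1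
  rw [Set.mem_Ioc]
  constructor
  · rintro rfl
    refine ⟨?_, Nat.sInf_mem hne⟩
    unfold cdfm1
    split
    · exact hu0
    · by_contra hc
      push_neg at hc
      have hms : qt (poisCdf l) u - 1 ∈ {m : ℕ | u ≤ poisCdf l m} := hc
      have h2 := Nat.sInf_le hms
      unfold qt at *
      omega
  · rintro ⟨h1, h2⟩
    refine le_antisymm (Nat.sInf_le h2) ?_
    by_contra hc
    push_neg at hc
    have hmem : u ≤ poisCdf l (sInf {m | u ≤ poisCdf l m}) := Nat.sInf_mem hne
    have hn0 : n ≠ 0 := by unfold qt at hc; omega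
    unfold cdfm1 at h1
    rw [if_neg hn0] at h1
    have hle : poisCdf l (qt (poisCdf l) u) ≤ poisCdf l (n - 1) :=
      poisCdf_mono hl (by unfold qt at hc ⊢; omega)
    unfold qt at hle
    linarith

lemma unif_Ioc_inter {a b : ℝ} (ha : 0 ≤ a) (hb : b ≤ 1) :
    unif (Ioc a b ∩ Ioo 0 1) = ENNReal.ofReal (b - a) := by
  rw [unif, Measure.restrict_apply (measurableSet_Ioc.inter measurableSet_Ioo),
    Set.inter_assoc, Set.inter_self]
  refine le_antisymm ?_ ?_
  · calc volume (Ioc a b ∩ Ioo 0 1) ≤ volume (Ioc a b) := measure_mono Set.inter_subset_left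
      _ = ENNReal.ofReal (b - a) := Real.volume_Ioc
  · have hsub : Ioo a b ⊆ Ioc a b ∩ Ioo 0 1 := fun x hx =>
      ⟨Set.Ioo_subset_Ioc_self hx, lt_of_le_of_lt ha hx.1, lt_of_lt_of_le hx.2 hb⟩
    calc ENNReal.ofReal (b - a) = volume (Ioo a b) := Real.volume_Ioo.symm
      _ ≤ volume (Ioc a b ∩ Ioo 0 1) := measure_mono hsub

lemma ofReal_max_zero (x : ℝ) : ENNReal.ofReal (max 0 x) = ENNReal.ofReal x := by
  rcases le_total x 0 with h | h
  · rw [max_eq_left h, ENNReal.ofReal_zero, ENNReal.ofReal_of_nonpos h]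
  · rw [max_eq_right h]

instance : IsProbabilityMeasure unif := by
  constructor
  rw [unif, Measure.restrict_apply MeasurableSet.univ, Set.univ_inter, Real.volume_Ioo]
  norm_num

instance (d : ℕ) : IsProbabilityMeasure (pmeas d) := by
  unfold pmeas; infer_instance


/-- clipped interval -/
noncomputable def IocIoo (a b : ℝ) : Set ℝ := Set.Ioc a b ∩ Set.Ioo 0 1

lemma IocIoo_subset (a b : ℝ) : IocIoo a b ⊆ Set.Ioo 0 1 := Set.inter_subset_right

lemma measurableSet_IocIoo (a b : ℝ) : MeasurableSet (IocIoo a b) :=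
  measurableSet_Ioc.inter measurableSet_Ioo

lemma mem_IocIoo3 {p q r b c d t : ℝ} :
    t ∈ IocIoo (max p (max q r)) (min b (min c d)) ↔
      t ∈ IocIoo p b ∧ t ∈ IocIoo q c ∧ t ∈ IocIoo r d := by
  simp only [IocIoo, Set.mem_inter_iff, Set.mem_Ioc, Set.mem_Ioo, max_lt_iff, le_min_iff]
  tauto

lemma mem_IocIoo2 {p q b c t : ℝ} :
    t ∈ IocIoo (max p q) (min b c) ↔ t ∈ IocIoo p b ∧ t ∈ IocIoo q c := by
  simp only [IocIoo, Set.mem_inter_iff, Set.mem_Ioc, Set.mem_Ioo, max_lt_iff, le_min_iff]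
  tauto

lemma mem_IocIoo_qt {l : ℝ} (hl : 0 ≤ l) {t : ℝ} (ht : t ∈ Ioo (0:ℝ) 1) (n : ℕ) :
    t ∈ IocIoo (cdfm1 (poisCdf l) n) (poisCdf l n) ↔ qt (poisCdf l) t = n := by
  rw [IocIoo, Set.mem_inter_iff, ← qt_eq_iff hl ht n]
  exact ⟨fun h => h.1, fun h => ⟨h, ht⟩⟩

lemma unif_IocIoo {a b : ℝ} (ha : 0 ≤ a) (hb : b ≤ 1) :
    unif (IocIoo a b) = ENNReal.ofReal (b - a) := unif_Ioc_inter ha hb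

/-- box product set -/
noncomputable def B3 (a0 b0 a1 b1 a2 b2 : ℝ) : Set (Fin 3 → ℝ) :=
  Set.univ.pi ![IocIoo a0 b0, IocIoo a1 b1, IocIoo a2 b2]

lemma mem_B3 {a0 b0 a1 b1 a2 b2 : ℝ} {u : Fin 3 → ℝ} :
    u ∈ B3 a0 b0 a1 b1 a2 b2 ↔
      u 0 ∈ IocIoo a0 b0 ∧ u 1 ∈ IocIoo a1 b1 ∧ u 2 ∈ IocIoo a2 b2 := by
  rw [B3, Set.mem_univ_pi]
  constructor
  · intro h; exact ⟨h 0, h 1, h 2⟩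
  · rintro ⟨h0, h1, h2⟩ i; fin_cases i <;> simpa

lemma measurableSet_B3 (a0 b0 a1 b1 a2 b2 : ℝ) :
    MeasurableSet (B3 a0 b0 a1 b1 a2 b2) := by
  apply MeasurableSet.univ_pi
  intro i; fin_cases i <;> simp <;> exact measurableSet_IocIoo _ _

lemma meas_B3 {a0 b0 a1 b1 a2 b2 : ℝ} (h0 : 0 ≤ a0) (h0' : b0 ≤ 1)
    (h1 : 0 ≤ a1) (h1' : b1 ≤ 1) (h2 : 0 ≤ a2) (h2' : b2 ≤ 1) :
    pmeas 3 (B3 a0 b0 a1 b1 a2 b2)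
      = ENNReal.ofReal (b0 - a0) * ENNReal.ofReal (b1 - a1) * ENNReal.ofReal (b2 - a2) := by
  rw [B3, pmeas, Measure.pi_pi, Fin.prod_univ_three]
  simp only [Matrix.cons_val_zero, Matrix.cons_val_one, Matrix.head_cons,
    Matrix.cons_val_two, Matrix.tail_cons]
  rw [unif_IocIoo h0 h0', unif_IocIoo h1 h1', unif_IocIoo h2 h2']

end MP3Aux


open MP3Aux Set in
/-- Trivariate MP model pmf: with `X₁(u) = q_{λ₁}(u₁)`,
`X₂(u) = q_{ω₂₁λ₂}(u₁) + q_{ω₂₂λ₂}(u₂)`,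
`X₃(u) = q_{ω₃₁λ₃}(u₁) + q_{ω₃₂λ₃}(u₂) + q_{ω₃₃λ₃}(u₃)` on (0,1)³ with the product uniform
measure, the joint pmf is a triple sum of comonotonic pmfs times a Poisson pmf. -/
theorem mp3_pmf (l1 l2 l3 : ℝ) (hl1 : 0 < l1) (hl2 : 0 < l2) (hl3 : 0 < l3)
    (w21 w31 w32 : ℝ)
    (hw21 : 0 ≤ w21) (hw31 : 0 ≤ w31) (hw32 : 0 ≤ w32)
    (hw21' : w21 ≤ 1) (hw31' : w31 ≤ 1) (hw32' : w32 ≤ 1)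
    (hw3 : w31 + w32 ≤ 1) (x1 x2 x3 : ℕ) :
    pmeas 3 {u : Fin 3 → ℝ |
        qt (poisCdf l1) (u 0) = x1 ∧
        qt (poisCdf (w21 * l2)) (u 0) + qt (poisCdf ((1 - w21) * l2)) (u 1) = x2 ∧
        qt (poisCdf (w31 * l3)) (u 0) + qt (poisCdf (w32 * l3)) (u 1)
          + qt (poisCdf ((1 - w31 - w32) * l3)) (u 2) = x3}
      = ENNReal.ofReal (
          ∑ z22 ∈ Finset.range (x2 + 1), ∑ z32 ∈ Finset.range (x3 + 1),
            ∑ z33 ∈ Finset.range (x3 - z32 + 1),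
              max 0 (min (poisCdf l1 x1)
                    (min (poisCdf (w21 * l2) (x2 - z22))
                      (poisCdf (w31 * l3) (x3 - z32 - z33)))
                  - max (cdfm1 (poisCdf l1) x1)
                      (max (cdfm1 (poisCdf (w21 * l2)) (x2 - z22))
                        (cdfm1 (poisCdf (w31 * l3)) (x3 - z32 - z33))))
                * max 0 (min (poisCdf ((1 - w21) * l2) z22) (poisCdf (w32 * l3) z32)
                    - max (cdfm1 (poisCdf ((1 - w21) * l2)) z22)
                        (cdfm1 (poisCdf (w32 * l3)) z32))
                * poisPmf ((1 - w31 - w32) * l3) z33) := by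
  classical
  have h21 : (0:ℝ) ≤ w21 * l2 := mul_nonneg hw21 hl2.le
  have h22 : (0:ℝ) ≤ (1 - w21) * l2 := mul_nonneg (by linarith) hl2.le
  have h31 : (0:ℝ) ≤ w31 * l3 := mul_nonneg hw31 hl3.le
  have h32 : (0:ℝ) ≤ w32 * l3 := mul_nonneg hw32 hl3.le
  have h33 : (0:ℝ) ≤ (1 - w31 - w32) * l3 := mul_nonneg (by linarith) hl3.le
  -- the pieces
  set B : ℕ → ℕ → ℕ → Set (Fin 3 → ℝ) := fun z22 z32 z33 =>
    B3 (max (cdfm1 (poisCdf l1) x1) (max (cdfm1 (poisCdf (w21 * l2)) (x2 - z22))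
          (cdfm1 (poisCdf (w31 * l3)) (x3 - z32 - z33))))
      (min (poisCdf l1 x1) (min (poisCdf (w21 * l2) (x2 - z22))
          (poisCdf (w31 * l3) (x3 - z32 - z33))))
      (max (cdfm1 (poisCdf ((1 - w21) * l2)) z22) (cdfm1 (poisCdf (w32 * l3)) z32))
      (min (poisCdf ((1 - w21) * l2) z22) (poisCdf (w32 * l3) z32))
      (cdfm1 (poisCdf ((1 - w31 - w32) * l3)) z33)
      (poisCdf ((1 - w31 - w32) * l3) z33) with hBdef
  -- characterize membership in B
  have hBmem : ∀ z22 z32 z33 (u : Fin 3 → ℝ), u ∈ B z22 z32 z33 ↔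
      (u 0 ∈ Ioo (0:ℝ) 1 ∧ u 1 ∈ Ioo (0:ℝ) 1 ∧ u 2 ∈ Ioo (0:ℝ) 1) ∧
      qt (poisCdf l1) (u 0) = x1 ∧
      qt (poisCdf (w21 * l2)) (u 0) = x2 - z22 ∧
      qt (poisCdf (w31 * l3)) (u 0) = x3 - z32 - z33 ∧
      qt (poisCdf ((1 - w21) * l2)) (u 1) = z22 ∧
      qt (poisCdf (w32 * l3)) (u 1) = z32 ∧
      qt (poisCdf ((1 - w31 - w32) * l3)) (u 2) = z33 := by
    intro z22 z32 z33 u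
    rw [hBdef]
    rw [mem_B3, mem_IocIoo3, mem_IocIoo2]
    constructor
    · rintro ⟨⟨m1, m2, m3⟩, ⟨n1, n2⟩, p1⟩
      have hu0 : u 0 ∈ Ioo (0:ℝ) 1 := IocIoo_subset _ _ m1
      have hu1 : u 1 ∈ Ioo (0:ℝ) 1 := IocIoo_subset _ _ n1
      have hu2 : u 2 ∈ Ioo (0:ℝ) 1 := IocIoo_subset _ _ p1
      exact ⟨⟨hu0, hu1, hu2⟩, (mem_IocIoo_qt hl1.le hu0 _).1 m1,
        (mem_IocIoo_qt h21 hu0 _).1 m2, (mem_IocIoo_qt h31 hu0 _).1 m3,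
        (mem_IocIoo_qt h22 hu1 _).1 n1, (mem_IocIoo_qt h32 hu1 _).1 n2,
        (mem_IocIoo_qt h33 hu2 _).1 p1⟩
    · rintro ⟨⟨hu0, hu1, hu2⟩, e1, e2, e3, e4, e5, e6⟩
      exact ⟨⟨(mem_IocIoo_qt hl1.le hu0 _).2 e1, (mem_IocIoo_qt h21 hu0 _).2 e2,
        (mem_IocIoo_qt h31 hu0 _).2 e3⟩,
        ⟨(mem_IocIoo_qt h22 hu1 _).2 e4, (mem_IocIoo_qt h32 hu1 _).2 e5⟩,
        (mem_IocIoo_qt h33 hu2 _).2 e6⟩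
  -- the box
  set box : Set (Fin 3 → ℝ) := Set.univ.pi (fun _ => Set.Ioo (0:ℝ) 1) with hboxdef
  have hboxm : MeasurableSet box := MeasurableSet.univ_pi fun _ => measurableSet_Ioo
  have hbox1 : pmeas 3 box = 1 := by
    rw [hboxdef, pmeas, Measure.pi_pi]
    have hu : unif (Set.Ioo 0 1) = 1 := by
      rw [unif, Measure.restrict_apply measurableSet_Ioo, Set.inter_self, Real.volume_Ioo]
      norm_num
    simp [hu]
  have hcompl : pmeas 3 boxᶜ = 0 := by
    haveI : IsProbabilityMeasure (pmeas 3) := by unfold pmeas; infer_instance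
    rw [measure_compl hboxm (measure_ne_top _ _), measure_univ, hbox1, tsub_self]
  have hinter : ∀ X : Set (Fin 3 → ℝ), pmeas 3 X = pmeas 3 (X ∩ box) := by
    intro X
    refine le_antisymm ?_ (measure_mono Set.inter_subset_left)
    calc pmeas 3 X ≤ pmeas 3 (X ∩ box) + pmeas 3 (X \ box) :=
          measure_le_inter_add_diff _ _ _
      _ ≤ pmeas 3 (X ∩ box) + pmeas 3 boxᶜ := by
          gcongr
          exact fun x hx => hx.2
      _ = pmeas 3 (X ∩ box) := by rw [hcompl, add_zero]
  -- decomposition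
  have hdecomp : {u : Fin 3 → ℝ |
        qt (poisCdf l1) (u 0) = x1 ∧
        qt (poisCdf (w21 * l2)) (u 0) + qt (poisCdf ((1 - w21) * l2)) (u 1) = x2 ∧
        qt (poisCdf (w31 * l3)) (u 0) + qt (poisCdf (w32 * l3)) (u 1)
          + qt (poisCdf ((1 - w31 - w32) * l3)) (u 2) = x3} ∩ box
      = ⋃ z22 ∈ Finset.range (x2 + 1), ⋃ z32 ∈ Finset.range (x3 + 1),
          ⋃ z33 ∈ Finset.range (x3 - z32 + 1), B z22 z32 z33 := by
    ext u
    simp only [Set.mem_inter_iff, Set.mem_setOf_eq, Set.mem_iUnion, Finset.mem_range,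
      Nat.lt_succ_iff, exists_prop]
    constructor
    · rintro ⟨⟨e1, e2, e3⟩, hb⟩
      have hb' := Set.mem_univ_pi.1 hb
      have hu0 : u 0 ∈ Ioo (0:ℝ) 1 := hb' 0
      have hu1 : u 1 ∈ Ioo (0:ℝ) 1 := hb' 1
      have hu2 : u 2 ∈ Ioo (0:ℝ) 1 := hb' 2
      refine ⟨qt (poisCdf ((1 - w21) * l2)) (u 1), by omega,
        qt (poisCdf (w32 * l3)) (u 1), by omega,
        qt (poisCdf ((1 - w31 - w32) * l3)) (u 2), by omega, ?_⟩
      rw [hBmem]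
      exact ⟨⟨hu0, hu1, hu2⟩, e1, by omega, by omega, rfl, rfl, rfl⟩
    · rintro ⟨z22, hz22, z32, hz32, z33, hz33, hu⟩
      rw [hBmem] at hu
      obtain ⟨⟨hu0, hu1, hu2⟩, e1, e2, e3, e4, e5, e6⟩ := hu
      refine ⟨⟨e1, by omega, by omega⟩, ?_⟩
      rw [hboxdef, Set.mem_univ_pi]
      intro i; fin_cases i
      · exact hu0
      · exact hu1
      · exact hu2
  -- rewrite right-hand side
  have htn : ∀ z22 z32 z33 : ℕ, (0:ℝ) ≤
      max 0 (min (poisCdf l1 x1)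
            (min (poisCdf (w21 * l2) (x2 - z22))
              (poisCdf (w31 * l3) (x3 - z32 - z33)))
          - max (cdfm1 (poisCdf l1) x1)
              (max (cdfm1 (poisCdf (w21 * l2)) (x2 - z22))
                (cdfm1 (poisCdf (w31 * l3)) (x3 - z32 - z33))))
        * max 0 (min (poisCdf ((1 - w21) * l2) z22) (poisCdf (w32 * l3) z32)
            - max (cdfm1 (poisCdf ((1 - w21) * l2)) z22)
                (cdfm1 (poisCdf (w32 * l3)) z32))
        * poisPmf ((1 - w31 - w32) * l3) z33 := by
    intro z22 z32 z33
    exact mul_nonneg (mul_nonneg (le_max_left _ _) (le_max_left _ _))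
      (poisPmf_nonneg h33 _)
  rw [hinter, hdecomp]
  rw [ENNReal.ofReal_sum_of_nonneg (fun i _ => Finset.sum_nonneg fun j _ =>
    Finset.sum_nonneg fun k _ => htn i j k)]
  rw [measure_biUnion_finset ?hd1 ?hm1]
  case hm1 =>
    intro z22 _
    apply Set.Finite.measurableSet_biUnion (Finset.finite_toSet _)
    intro z32 _
    apply Set.Finite.measurableSet_biUnion (Finset.finite_toSet _)
    intro z33 _
    rw [hBdef]
    exact measurableSet_B3 _ _ _ _ _ _
  case hd1 =>
    intro i _ j _ hij
    refine Set.disjoint_left.2 ?_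
    intro u hu hu'
    simp only [Set.mem_iUnion, exists_prop] at hu hu'
    obtain ⟨a, _, b, _, hB1⟩ := hu
    obtain ⟨a', _, b', _, hB2⟩ := hu'
    have q1 := ((hBmem _ _ _ u).1 hB1).2.2.2.2.1
    have q2 := ((hBmem _ _ _ u).1 hB2).2.2.2.2.1
    exact hij (by omega)
  refine Finset.sum_congr rfl fun z22 hz22 => ?_
  rw [ENNReal.ofReal_sum_of_nonneg (fun j _ => Finset.sum_nonneg fun k _ => htn z22 j k)]
  rw [measure_biUnion_finset ?hd2 ?hm2]
  case hm2 =>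
    intro z32 _
    apply Set.Finite.measurableSet_biUnion (Finset.finite_toSet _)
    intro z33 _
    rw [hBdef]
    exact measurableSet_B3 _ _ _ _ _ _
  case hd2 =>
    intro i _ j _ hij
    refine Set.disjoint_left.2 ?_
    intro u hu hu'
    simp only [Set.mem_iUnion, exists_prop] at hu hu'
    obtain ⟨b, _, hB1⟩ := hu
    obtain ⟨b', _, hB2⟩ := hu'
    have q1 := ((hBmem _ _ _ u).1 hB1).2.2.2.2.2.1
    have q2 := ((hBmem _ _ _ u).1 hB2).2.2.2.2.2.1
    exact hij (by omega)
  refine Finset.sum_congr rfl fun z32 hz32 => ?_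
  rw [ENNReal.ofReal_sum_of_nonneg (fun k _ => htn z22 z32 k)]
  rw [measure_biUnion_finset ?hd3 ?hm3]
  case hm3 =>
    intro z33 _
    rw [hBdef]
    exact measurableSet_B3 _ _ _ _ _ _
  case hd3 =>
    intro i _ j _ hij
    refine Set.disjoint_left.2 ?_
    intro u hu hu'
    have q1 := ((hBmem _ _ _ u).1 hu).2.2.2.2.2.2
    have q2 := ((hBmem _ _ _ u).1 hu').2.2.2.2.2.2
    exact hij (by omega)
  refine Finset.sum_congr rfl fun z33 hz33 => ?_
  -- per-term measure
  rw [hBdef]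
  rw [meas_B3
    (le_trans (cdfm1_nonneg hl1.le x1) (le_max_left _ _))
    (le_trans (min_le_left _ _) (poisCdf_le_one hl1.le x1))
    (le_trans (cdfm1_nonneg h22 z22) (le_max_left _ _))
    (le_trans (min_le_left _ _) (poisCdf_le_one h22 z22))
    (cdfm1_nonneg h33 z33)
    (poisCdf_le_one h33 z33)]
  rw [poisCdf_sub_cdfm1]
  rw [← ofReal_max_zero (min (poisCdf l1 x1) _ - _), ← ofReal_max_zero
    (min (poisCdf ((1 - w21) * l2) z22) _ - _)]
  rw [← ENNReal.ofReal_mul (le_max_left _ _),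
    ← ENNReal.ofReal_mul (mul_nonneg (le_max_left _ _) (le_max_left _ _))]
end
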